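/- Let n be a positive integer, K a nonzero n×n real symmetric positive semidefinite matrix, λ > 0, y ∈ ℝⁿ, z ∈ ℝⁿ, and p ≥ 0. Set l = p zᵀ (K + nλI)⁻¹ z, L = (p/(n²λ)) zᵀ (y yᵀ + n I) z, D = (1/(n²λ)) Tr[(y yᵀ + n I) K], and q = L/D; assume q > 0. Define the whitened importance-weighted rank-one matrix A = (K + nλI)^{-1/2} ((p/q) z zᵀ) (K + nλI)^{-1/2}. Then A² = (l/q) A, and consequently A² ⪯ D · A in the Loewner order. -/

import Mathlib

open Matrix

section Aux

variable {n : ℕ}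

private lemma aux_vmv_sq (w : Fin n → ℝ) :
    vecMulVec w w * vecMulVec w w = (w ⬝ᵥ w) • vecMulVec w w := by
  ext i j
  simp only [Matrix.mul_apply, vecMulVec_apply, Matrix.smul_apply, smul_eq_mul, dotProduct]
  rw [Finset.sum_mul]
  exact Finset.sum_congr rfl fun k _ => by ring

private lemma aux_quadform (w x : Fin n → ℝ) :
    x ⬝ᵥ (vecMulVec w w *ᵥ x) = (w ⬝ᵥ x) ^ 2 := by
  simp only [dotProduct, mulVec, vecMulVec_apply, dotProduct, pow_two]
  rw [Finset.sum_mul_sum]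
  apply Finset.sum_congr rfl; intro i _
  rw [Finset.mul_sum]
  exact Finset.sum_congr rfl fun j _ => by ring

private lemma aux_smul_vmv_psd (c : ℝ) (hc : 0 ≤ c) (w : Fin n → ℝ) :
    (c • vecMulVec w w).PosSemidef := by
  refine PosSemidef.of_dotProduct_mulVec_nonneg ?_ ?_
  · ext i j
    simp [vecMulVec_apply, mul_comm]
  · intro x
    have : star x ⬝ᵥ ((c • vecMulVec w w) *ᵥ x) = c * (w ⬝ᵥ x) ^ 2 := by
      rw [star_trivial, smul_mulVec, dotProduct_smul, aux_quadform]
      rfl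
    rw [this]
    positivity

private lemma aux_mul_vmv_mul (M N : Matrix (Fin n) (Fin n) ℝ) (a b : Fin n → ℝ) :
    M * vecMulVec a b * N = vecMulVec (M *ᵥ a) (b ᵥ* N) := by
  ext i j
  simp only [Matrix.mul_apply, vecMulVec_apply, mulVec, vecMul, dotProduct]
  rw [Finset.sum_mul_sum, Finset.sum_comm]
  apply Finset.sum_congr rfl; intro k _
  rw [Finset.sum_mul]
  exact Finset.sum_congr rfl fun m _ => by ring

private lemma aux_trace_vmv_mul (y : Fin n → ℝ) (K : Matrix (Fin n) (Fin n) ℝ) :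
    Matrix.trace (vecMulVec y y * K) = y ⬝ᵥ (K *ᵥ y) := by
  simp only [Matrix.trace, Matrix.diag_apply, Matrix.mul_apply, vecMulVec_apply,
    dotProduct, mulVec]
  rw [Finset.sum_comm]
  apply Finset.sum_congr rfl; intro j _
  rw [Finset.mul_sum]
  exact Finset.sum_congr rfl fun i _ => by ring

private lemma aux_trace_pos {K : Matrix (Fin n) (Fin n) ℝ} (hK : K.PosSemidef)
    (hKne : K ≠ 0) : 0 < Matrix.trace K := by
  have hdiag : ∀ i, 0 ≤ K i i := fun i => by
    have h := hK.dotProduct_mulVec_nonneg (Pi.single i 1)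
    simpa [mulVec_single, single_dotProduct] using h
  have htr : 0 ≤ Matrix.trace K := Finset.sum_nonneg fun i _ => hdiag i
  rcases htr.lt_or_eq with h | h
  · exact h
  · exfalso
    apply hKne
    have hzero : ∀ i, K i i = 0 := by
      intro i
      have := (Finset.sum_eq_zero_iff_of_nonneg (fun i _ => hdiag i)).mp h.symm
      exact this i (Finset.mem_univ i)
    have hcol : ∀ i, K *ᵥ Pi.single i 1 = 0 := by
      intro i
      apply (hK.dotProduct_mulVec_zero_iff (Pi.single i 1)).mp
      simp [mulVec_single, single_dotProduct, hzero i]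
    ext i j
    have := congrFun (hcol j) i
    simpa [mulVec_single] using this

end Aux

set_option maxHeartbeats 1000000 in
/-- for the whitened importance-weighted rank-one matrix
`A = (K+nλI)^{-1/2} ((p/q) z zᵀ) (K+nλI)^{-1/2}` one has `A² = (l/q) A`, and hence
`A² ⪯ D · A` in the Loewner order. -/
theorem whitened_rank_one_second_moment {n : ℕ} (hn : 0 < n)
    (K : Matrix (Fin n) (Fin n) ℝ) (hK : K.PosSemidef) (hKne : K ≠ 0)
    (lam : ℝ) (hlam : 0 < lam) (y z : Fin n → ℝ) (p : ℝ) (hp : 0 ≤ p)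
    (l L D q : ℝ)
    (hl : l = p * (z ⬝ᵥ ((K + (↑n * lam) • (1 : Matrix (Fin n) (Fin n) ℝ))⁻¹ *ᵥ z)))
    (hL : L = (p / ((n : ℝ) ^ 2 * lam)) *
        (z ⬝ᵥ ((vecMulVec y y + (n : ℝ) • (1 : Matrix (Fin n) (Fin n) ℝ)) *ᵥ z)))
    (hD : D = (1 / ((n : ℝ) ^ 2 * lam)) *
        Matrix.trace ((vecMulVec y y + (n : ℝ) • (1 : Matrix (Fin n) (Fin n) ℝ)) * K))
    (hq : q = L / D) (hqpos : 0 < q)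
    (S : Matrix (Fin n) (Fin n) ℝ) (hS : S.PosDef)
    (hSS : S * S = K + (↑n * lam) • (1 : Matrix (Fin n) (Fin n) ℝ))
    (A : Matrix (Fin n) (Fin n) ℝ)
    (hA : A = S⁻¹ * ((p / q) • vecMulVec z z) * S⁻¹) :
    A * A = (l / q) • A ∧ (D • A - A * A).PosSemidef := by
  have hnR : (0:ℝ) < n := Nat.cast_pos.mpr hn
  -- symmetry of S and S⁻¹
  have hSt : Sᵀ = S := by
    simpa [Matrix.conjTranspose_eq_transpose_of_trivial] using hS.isHermitian.eq
  have hSinvT : (S⁻¹)ᵀ = S⁻¹ := by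
    rw [Matrix.transpose_nonsing_inv, hSt]
  have hSunit : IsUnit S := hS.isUnit
  have hSinv : S * S⁻¹ = 1 := Matrix.mul_nonsing_inv S (Matrix.isUnit_iff_isUnit_det S |>.mp hSunit)
  -- the whitened vector
  set w : Fin n → ℝ := S⁻¹ *ᵥ z with hw
  have hzw : S *ᵥ w = z := by
    rw [hw, mulVec_mulVec, hSinv, one_mulVec]
  -- A = (p/q) • vecMulVec w w
  have hAw : A = (p / q) • vecMulVec w w := by
    rw [hA, Matrix.mul_smul, Matrix.smul_mul, aux_mul_vmv_mul]
    congr 1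
    rw [← hw]
    congr 1
    rw [← Matrix.mulVec_transpose, hSinvT]
  -- inverse identity
  have hinv : (K + (↑n * lam) • (1 : Matrix (Fin n) (Fin n) ℝ))⁻¹ = S⁻¹ * S⁻¹ := by
    rw [← hSS, Matrix.mul_inv_rev]
  -- l = p * (w ⬝ᵥ w)
  have hlw : l = p * (w ⬝ᵥ w) := by
    rw [hl, hinv]
    congr 1
    rw [← mulVec_mulVec, ← hw, dotProduct_mulVec, ← Matrix.mulVec_transpose, hSinvT, ← hw]
  -- Part 1 : A * A = (l/q) • A
  have part1 : A * A = (l / q) • A := by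
    rw [hAw, Matrix.smul_mul, Matrix.mul_smul, aux_vmv_sq, hlw]
    rw [smul_smul, smul_smul, smul_smul]
    congr 1
    ring
  refine ⟨part1, ?_⟩
  -- scalar computations
  have hn2lam : (0:ℝ) < (n:ℝ) ^ 2 * lam := by positivity
  -- trace term
  have htr : Matrix.trace ((vecMulVec y y + (n : ℝ) • (1 : Matrix (Fin n) (Fin n) ℝ)) * K)
      = y ⬝ᵥ (K *ᵥ y) + (n : ℝ) * Matrix.trace K := by
    rw [Matrix.add_mul, Matrix.trace_add, aux_trace_vmv_mul, Matrix.smul_mul, Matrix.one_mul,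
      Matrix.trace_smul]
    rfl
  have hyKy : 0 ≤ y ⬝ᵥ (K *ᵥ y) := by simpa [star_trivial] using hK.dotProduct_mulVec_nonneg y
  have htrK : 0 < Matrix.trace K := aux_trace_pos hK hKne
  have hDpos : 0 < D := by
    rw [hD, htr]
    have : 0 < y ⬝ᵥ (K *ᵥ y) + (n : ℝ) * Matrix.trace K := by positivity
    positivity
  have hLpos : 0 < L := by
    have : L = q * D := by rw [hq]; field_simp
    rw [this]; positivity
  -- L in explicit form
  have hLe : L = (p / ((n : ℝ) ^ 2 * lam)) * ((y ⬝ᵥ z) ^ 2 + (n : ℝ) * (z ⬝ᵥ z)) := by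
    rw [hL]
    congr 1
    rw [add_mulVec, dotProduct_add, aux_quadform, smul_mulVec, one_mulVec,
      dotProduct_smul]
    rfl
  -- z ⬝ᵥ z = wᵀ K w + nλ (w ⬝ᵥ w)
  have hzz : z ⬝ᵥ z = w ⬝ᵥ (K *ᵥ w) + ((n:ℝ) * lam) * (w ⬝ᵥ w) := by
    have h1 : w ⬝ᵥ ((S * S) *ᵥ w) = z ⬝ᵥ z := by
      rw [← mulVec_mulVec, hzw, dotProduct_mulVec, ← Matrix.mulVec_transpose, hSt, hzw]
    rw [← h1, hSS, add_mulVec, dotProduct_add, smul_mulVec, one_mulVec, dotProduct_smul]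
    rfl
  have hwKw : 0 ≤ w ⬝ᵥ (K *ᵥ w) := by simpa [star_trivial] using hK.dotProduct_mulVec_nonneg w
  have hww : 0 ≤ w ⬝ᵥ w := by simpa [star_trivial] using dotProduct_star_self_nonneg w
  -- l ≤ L
  have hlL : l ≤ L := by
    rw [hlw, hLe]
    have hc : p / ((n:ℝ)^2 * lam) * ((n:ℝ)^2 * lam) = p := by field_simp
    have hzz' : (n:ℝ) * lam * (w ⬝ᵥ w) ≤ z ⬝ᵥ z := by nlinarith [hzz, hwKw]
    have hcnn : 0 ≤ p / ((n:ℝ)^2 * lam) := by positivity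
    nlinarith [sq_nonneg (y ⬝ᵥ z), mul_le_mul_of_nonneg_left hzz' hcnn]
  -- D - l/q ≥ 0
  have hcoef : 0 ≤ D - l / q := by
    have hqD : q = L / D := hq
    have : l / q = l * D / L := by
      rw [hqD]; field_simp
    rw [this]
    rw [sub_nonneg, div_le_iff₀ hLpos]
    calc l * D = D * l := mul_comm _ _
      _ ≤ D * L := mul_le_mul_of_nonneg_left hlL hDpos.le
  -- Part 2
  have key : D • A - A * A = ((D - l / q) * (p / q)) • vecMulVec w w := by
    rw [part1, hAw, smul_smul, smul_smul, ← sub_smul, sub_mul]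
  rw [key]
  exact aux_smul_vmv_psd _ (mul_nonneg hcoef (by positivity)) w
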